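/- Let A be a commutative ring, B a commutative A-algebra, x, y ∈ B, and m, n natural numbers. If x is m-integral over A and y is n-integral over A, then x·y is (n·m)-integral over A. -/

import Mathlib

open Polynomial

open Matrix

theorem aux_eval {A B ι : Type*} [CommRing A] [CommRing B] [Algebra A B] [Fintype ι]
    [DecidableEq ι] (M : Matrix ι ι A) (v : ι → B) (u : B)
    (hv : ((algebraMap A B).mapMatrix M) *ᵥ v = u • v) (p : A[X]) :
    ((algebraMap A B).mapMatrix (aeval M p)) *ᵥ v = (aeval u p) • v := by
  induction p using Polynomial.induction_on' with
  | add p q hp hq =>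
      simp only [map_add, Matrix.add_mulVec, hp, hq, add_smul]
  | monomial k a =>
      have hpow : ∀ k : ℕ, ((algebraMap A B).mapMatrix (M ^ k)) *ᵥ v = (u ^ k) • v := by
        intro k
        induction k with
        | zero => simp
        | succ k ih =>
            rw [pow_succ, _root_.map_mul, ← Matrix.mulVec_mulVec, hv, Matrix.mulVec_smul, ih,
              smul_smul, ← pow_succ']
      rw [aeval_monomial, aeval_monomial, _root_.map_mul, ← Matrix.mulVec_mulVec, hpow]
      rw [Matrix.mulVec_smul]
      have : ((algebraMap A B).mapMatrix ((algebraMap A (Matrix ι ι A)) a)) *ᵥ v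
          = (algebraMap A B a) • v := by
        rw [Matrix.algebraMap_eq_diagonal]
        ext i
        simp [Matrix.mulVec_diagonal, Algebra.smul_def]
      rw [this, smul_smul, mul_comm]

/-- companion-matrix row sum identity -/
theorem aux_row {A B : Type*} [CommRing A] [CommRing B] [Algebra A B] (x : B) {m : ℕ}
    (p : A[X]) (hmonic : p.Monic) (hdeg : p.natDegree = m) (hroot : aeval x p = 0)
    (i : Fin m) :
    ∑ i' : Fin m, algebraMap A B (if (i:ℕ)+1 < m then (if (i':ℕ) = (i:ℕ)+1 then (1:A) else 0)
      else -p.coeff i') * x ^ (i':ℕ) = x ^ ((i:ℕ)+1) := by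
  by_cases h : (i:ℕ)+1 < m
  · simp only [if_pos h]
    rw [Finset.sum_eq_single (⟨(i:ℕ)+1, h⟩ : Fin m)]
    · simp
    · intro b _ hb
      rw [if_neg, map_zero, zero_mul]
      exact fun e => hb (Fin.ext e)
    · simp
  · have him : (i:ℕ)+1 = m := le_antisymm i.isLt (not_lt.mp h)
    simp only [if_neg h, map_neg, neg_mul]
    rw [Finset.sum_neg_distrib]
    have hsum : (∑ k ∈ Finset.range m, algebraMap A B (p.coeff k) * x ^ k) + x ^ m = 0 := by
      have h2 := hroot
      rw [aeval_eq_sum_range, hdeg, Finset.sum_range_succ] at h2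
      have hc : p.coeff m = 1 := by rw [← hdeg]; exact hmonic.coeff_natDegree
      simpa [Algebra.smul_def, hc] using h2
    rw [Fin.sum_univ_eq_sum_range (fun k => algebraMap A B (p.coeff k) * x ^ k), him]
    linear_combination -hsum

theorem stmt5 {A B : Type*} [CommRing A] [CommRing B] [Algebra A B] (x y : B) (m n : ℕ)
    (hx : ∃ P : A[X], P.Monic ∧ P.natDegree = m ∧ aeval x P = 0)
    (hy : ∃ P : A[X], P.Monic ∧ P.natDegree = n ∧ aeval y P = 0) :
    ∃ P : A[X], P.Monic ∧ P.natDegree = n * m ∧ aeval (x * y) P = 0 := by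
  classical
  obtain ⟨px, hpxm, hpxd, hpxr⟩ := hx
  obtain ⟨py, hpym, hpyd, hpyr⟩ := hy
  rcases Nat.eq_zero_or_pos m with hm | hm
  · subst hm
    have h1 : px = 1 := hpxm.natDegree_eq_zero.mp hpxd
    rw [h1, _root_.map_one] at hpxr
    have hB : Subsingleton B := subsingleton_of_zero_eq_one hpxr.symm
    exact ⟨1, monic_one, by simp, Subsingleton.elim _ _⟩
  rcases Nat.eq_zero_or_pos n with hn | hn
  · subst hn
    have h1 : py = 1 := hpym.natDegree_eq_zero.mp hpyd
    rw [h1, _root_.map_one] at hpyr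
    have hB : Subsingleton B := subsingleton_of_zero_eq_one hpyr.symm
    exact ⟨1, monic_one, by simp, Subsingleton.elim _ _⟩
  have hA : Nontrivial A := by
    by_contra hA
    rw [not_nontrivial_iff_subsingleton] at hA
    have h0 : px = 0 := Subsingleton.elim _ _
    rw [h0, natDegree_zero] at hpxd; omega
  set φ := algebraMap A B with hφ
  set cx : Matrix (Fin m) (Fin m) A := fun i i' =>
    if (i:ℕ)+1 < m then (if (i':ℕ) = (i:ℕ)+1 then 1 else 0) else -px.coeff i' with hcx
  set cy : Matrix (Fin n) (Fin n) A := fun j j' =>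
    if (j:ℕ)+1 < n then (if (j':ℕ) = (j:ℕ)+1 then 1 else 0) else -py.coeff j' with hcy
  set M : Matrix (Fin m × Fin n) (Fin m × Fin n) A :=
    fun p q => cx p.1 q.1 * cy p.2 q.2 with hM
  set v : Fin m × Fin n → B := fun p => x ^ (p.1:ℕ) * y ^ (p.2:ℕ) with hvdef
  have hv : (φ.mapMatrix M) *ᵥ v = (x*y) • v := by
    ext ⟨i, j⟩
    have lhs_eq : ((φ.mapMatrix M) *ᵥ v) (i, j)
        = (∑ i' : Fin m, φ (cx i i') * x ^ (i' : ℕ))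
          * (∑ j' : Fin n, φ (cy j j') * y ^ (j' : ℕ)) := by
      rw [Finset.sum_mul_sum, Matrix.mulVec, dotProduct, Fintype.sum_prod_type]
      refine Finset.sum_congr rfl fun i' _ => Finset.sum_congr rfl fun j' _ => ?_
      change φ (M (i, j) (i', j')) * _ = _
      simp only [RingHom.mapMatrix_apply, Matrix.map_apply, hM, hvdef, _root_.map_mul]
      ring
    rw [lhs_eq, aux_row x px hpxm hpxd hpxr i, aux_row y py hpym hpyd hpyr j]
    simp only [Pi.smul_apply, hvdef, smul_eq_mul]
    ring
  refine ⟨M.charpoly, M.charpoly_monic, ?_, ?_⟩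
  · rw [M.charpoly_natDegree_eq_dim, Fintype.card_prod, Fintype.card_fin, Fintype.card_fin,
      Nat.mul_comm]
  · have h0 := aux_eval M v (x*y) hv M.charpoly
    rw [M.aeval_self_charpoly, map_zero, Matrix.zero_mulVec] at h0
    have h2 := congrFun h0.symm (⟨0, hm⟩, ⟨0, hn⟩)
    simpa [hvdef] using h2
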